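/- Let a, b be nonzero integers. If for all but finitely many prime numbers l there exist integers x, y, both coprime to l, with l ∣ (a y² − b x²), then b/a is the square of a rational number; that is, there exists r ∈ ℚ with b = a·r². -/

import Mathlib

lemma aux_sq_of_even_factorization {m : ℕ} (hm : m ≠ 0)
    (h : ∀ p, Even (m.factorization p)) : IsSquare m := by
  refine ⟨m.factorization.prod fun p e => p ^ (e / 2), ?_⟩
  conv_lhs => rw [← Nat.factorization_prod_pow_eq_self hm]
  rw [Finsupp.prod, Finsupp.prod, ← Finset.prod_mul_distrib]
  refine Finset.prod_congr rfl fun p hp => ?_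
  rw [← pow_add]
  congr 1
  obtain ⟨c, hc⟩ := h p
  omega

lemma aux_coprime_of_modEq_one {b t : ℕ} (h : b ≡ 1 [MOD t]) : Nat.Coprime t b := by
  have := h.gcd_eq
  simpa [Nat.coprime_comm, Nat.Coprime] using this

lemma aux_exists_odd_jacobi_neg {n : ℤ} (hn : n ≠ 0) (hns : ¬ IsSquare n) :
    ∃ b : ℕ, Odd b ∧ jacobiSym n b = -1 := by
  set m := n.natAbs with hm_def
  have hm : m ≠ 0 := Int.natAbs_ne_zero.mpr hn
  have hsign : n = n.sign * m := (Int.sign_mul_natAbs n).symm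
  have hsign_cases : n.sign = 1 ∨ n.sign = -1 := by
    rcases lt_trichotomy n 0 with h | h | h
    · exact Or.inr (Int.sign_eq_neg_one_of_neg h)
    · exact absurd h hn
    · exact Or.inl (Int.sign_eq_one_of_pos h)
  by_cases hq : ∃ q : ℕ, q.Prime ∧ q ≠ 2 ∧ Odd (m.factorization q)
  · -- Case A : some odd prime with odd multiplicity
    obtain ⟨q, hqp, hq2, hk⟩ := hq
    haveI := Fact.mk hqp
    set k := m.factorization q with hk_def
    set e := m.factorization 2 with he_def
    set V := ordCompl[2] (ordCompl[q] m) with hV_def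
    have hmq : ordCompl[q] m ≠ 0 := (Nat.ordCompl_pos q hm).ne'
    have hV0 : V ≠ 0 := (Nat.ordCompl_pos 2 hmq).ne'
    have hVodd : Odd V := Nat.odd_iff.mpr <| by
      have h2 := Nat.not_dvd_ordCompl Nat.prime_two hmq
      omega
    have hqV : ¬ q ∣ V := fun hdvd =>
      Nat.not_dvd_ordCompl hqp hm (hdvd.trans (Nat.ordCompl_dvd _ 2))
    have he' : (ordCompl[q] m).factorization 2 = e := by
      rw [Nat.factorization_ordCompl, Finsupp.erase_ne (Ne.symm hq2)]
    have hdecomp : m = q ^ k * (2 ^ e * V) := by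
      have h1 : q ^ k * (ordCompl[q] m) = m := Nat.ordProj_mul_ordCompl_eq_self m q
      have h2 : 2 ^ ((ordCompl[q] m).factorization 2) * V = ordCompl[q] m :=
        Nat.ordProj_mul_ordCompl_eq_self _ 2
      rw [he'] at h2
      rw [← h1, ← h2]
    have hchar : ringChar (ZMod q) ≠ 2 := by
      rw [ZMod.ringChar_zmod_n]; exact_mod_cast hq2
    obtain ⟨x, hx⟩ := FiniteField.exists_nonsquare hchar
    set c := x.val with hc_def
    have hc : (c : ZMod q) = x := ZMod.natCast_rightInverse x
    have hq8 : ¬ q ∣ 8 := by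
      intro hdvd
      exact hq2 <| (Nat.prime_dvd_prime_iff_eq hqp Nat.prime_two).mp
        (hqp.dvd_of_dvd_pow (show q ∣ 2 ^ 3 by norm_num [hdvd]))
    have hco : Nat.Coprime (8 * V) q :=
      (Nat.Coprime.mul_right ((hqp.coprime_iff_not_dvd).mpr hq8)
        ((hqp.coprime_iff_not_dvd).mpr hqV)).symm
    obtain ⟨b, hb1, hb2⟩ := Nat.chineseRemainder hco 1 c
    have hb8 : b % 8 = 1 := by
      have := hb1.of_dvd (dvd_mul_right 8 V)
      simpa [Nat.ModEq] using this
    have hbodd : Odd b := Nat.odd_iff.mpr (by omega)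
    have hb4 : b % 4 = 1 := by omega
    have hbV : b ≡ 1 [MOD V] := hb1.of_dvd (dvd_mul_left V 8)
    refine ⟨b, hbodd, ?_⟩
    have hmcast : (m : ℤ) = (q : ℤ) ^ k * ((2 : ℤ) ^ e * (V : ℤ)) := by
      exact_mod_cast congrArg (Nat.cast : ℕ → ℤ) hdecomp
    have hcast : n = n.sign * ((q : ℤ) ^ k * ((2 : ℤ) ^ e * (V : ℤ))) := by
      rw [← hmcast]; exact hsign
    rw [hcast, jacobiSym.mul_left, jacobiSym.mul_left, jacobiSym.mul_left,
      jacobiSym.pow_left, jacobiSym.pow_left]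
    have hJsign : jacobiSym n.sign b = 1 := by
      rcases hsign_cases with h | h
      · rw [h]; exact jacobiSym.one_left b
      · rw [h, jacobiSym.at_neg_one hbodd, ZMod.χ₄_nat_one_mod_four hb4]
    have hJ2 : jacobiSym 2 b = 1 := by
      rw [jacobiSym.at_two hbodd, ZMod.χ₈_nat_mod_eight, hb8]
      decide
    have hJV : jacobiSym (V : ℤ) b = 1 := by
      rw [jacobiSym.quadratic_reciprocity_one_mod_four' hVodd hb4,
        jacobiSym.mod_left' (show (b : ℤ) % V = (1 : ℤ) % V by exact_mod_cast hbV),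
        jacobiSym.one_left]
    have hJq : jacobiSym (q : ℤ) b = -1 := by
      rw [jacobiSym.quadratic_reciprocity_one_mod_four' (hqp.odd_of_ne_two hq2) hb4,
        jacobiSym.mod_left' (show ((b : ℕ) : ℤ) % q = ((c : ℕ) : ℤ) % q by exact_mod_cast hb2),
        ← jacobiSym.legendreSym.to_jacobiSym]
      exact (legendreSym.eq_neg_one_iff' q).mpr (by rwa [hc])
    rw [hJsign, hJ2, hJV, hJq, one_pow, Odd.neg_one_pow hk]
    ring
  · -- Case B : m = 2 ^ e * t ^ 2
    push_neg at hq
    have hall : ∀ p, Even ((ordCompl[2] m).factorization p) := by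
      intro p
      rw [Nat.factorization_ordCompl]
      rcases eq_or_ne p 2 with rfl | hp2
      · simp
      · rw [Finsupp.erase_ne hp2]
        by_cases hp : p.Prime
        · exact Nat.not_odd_iff_even.mp (hq p hp hp2)
        · simp [Nat.factorization_eq_zero_of_not_prime _ hp]
    set w := ordCompl[2] m with hw_def
    set e := m.factorization 2 with he_def
    have hw0 : w ≠ 0 := (Nat.ordCompl_pos 2 hm).ne'
    have hwodd : Odd w := Nat.odd_iff.mpr <| by
      have h2 := Nat.not_dvd_ordCompl Nat.prime_two hm
      omega
    obtain ⟨t, ht⟩ := aux_sq_of_even_factorization hw0 hall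
    have hdecomp : m = 2 ^ e * w := (Nat.ordProj_mul_ordCompl_eq_self m 2).symm
    have htdvd : t ∣ w := ht ▸ dvd_mul_left t t
    have hcase : Odd e ∨ n.sign = -1 := by
      by_contra hcon
      push_neg at hcon
      obtain ⟨hee, hs⟩ := hcon
      have hs1 : n.sign = 1 := hsign_cases.resolve_right hs
      apply hns
      rw [hsign, hs1, one_mul, Int.isSquare_natCast_iff]
      obtain ⟨u, hu⟩ := Nat.not_odd_iff_even.mp hee
      exact ⟨2 ^ u * t, by rw [hdecomp, ht, hu]; ring⟩
    set r : ℕ := if Odd e then 5 else 3 with hr_def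
    have hr35 : r = 3 ∨ r = 5 := by rw [hr_def]; split <;> simp
    have hco : Nat.Coprime 8 w := Nat.Coprime.pow_left 3 hwodd.coprime_two_left
    obtain ⟨b, hb1, hb2⟩ := Nat.chineseRemainder hco r 1
    have hb8 : b % 8 = r := by
      have h1 : b % 8 = r % 8 := hb1
      omega
    have hbodd : Odd b := Nat.odd_iff.mpr (by omega)
    refine ⟨b, hbodd, ?_⟩
    have hct : Nat.Coprime t b := aux_coprime_of_modEq_one (hb2.of_dvd htdvd)
    have hmcast : (m : ℤ) = (2 : ℤ) ^ e * (t : ℤ) ^ 2 := by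
      rw [hdecomp, ht]; push_cast; ring
    have hcast : n = n.sign * ((2 : ℤ) ^ e * (t : ℤ) ^ 2) := by
      rw [← hmcast]; exact hsign
    rw [hcast, jacobiSym.mul_left, jacobiSym.mul_left, jacobiSym.pow_left]
    have hJt : jacobiSym ((t : ℤ) ^ 2) b = 1 :=
      jacobiSym.sq_one' (by simpa [Int.gcd_natCast_natCast] using hct)
    have hJ2 : jacobiSym 2 b = ZMod.χ₈ b := jacobiSym.at_two hbodd
    by_cases heo : Odd e
    · have hbr : b % 8 = 5 := by simpa [hr_def, heo] using hb8
      have hb4 : b % 4 = 1 := by omega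
      have hJsign : jacobiSym n.sign b = 1 := by
        rcases hsign_cases with h | h
        · rw [h]; exact jacobiSym.one_left b
        · rw [h, jacobiSym.at_neg_one hbodd, ZMod.χ₄_nat_one_mod_four hb4]
      have hJ2v : jacobiSym 2 b = -1 := by
        rw [hJ2, ZMod.χ₈_nat_mod_eight, hbr]; decide
      rw [hJsign, hJ2v, hJt, Odd.neg_one_pow heo]
      ring
    · have hs : n.sign = -1 := hcase.resolve_left heo
      have hbr : b % 8 = 3 := by simpa [hr_def, heo] using hb8
      have hb4 : b % 4 = 3 := by omega
      have hJsign : jacobiSym n.sign b = -1 := by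
        rw [hs, jacobiSym.at_neg_one hbodd, ZMod.χ₄_nat_three_mod_four hb4]
      have hJ2v : jacobiSym 2 b = -1 := by
        rw [hJ2, ZMod.χ₈_nat_mod_eight, hbr]; decide
      rw [hJsign, hJ2v, hJt, Even.neg_one_pow (Nat.not_odd_iff_even.mp heo)]
      ring

lemma aux_infinite_nonsquare_primes {n : ℤ} (hn : n ≠ 0) (hns : ¬ IsSquare n) :
    {p : ℕ | p.Prime ∧ ¬ IsSquare (n : ZMod p)}.Infinite := by
  obtain ⟨b, hbodd, hbJ⟩ := aux_exists_odd_jacobi_neg hn hns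
  set M := 4 * n.natAbs with hM
  have hM0 : M ≠ 0 := by
    have := Int.natAbs_ne_zero.mpr hn
    omega
  haveI : NeZero M := ⟨hM0⟩
  have hb0 : b ≠ 0 := by rintro rfl; simp at hbodd
  haveI : NeZero b := ⟨hb0⟩
  have hgcd : Int.gcd n b = 1 := by
    by_contra hg
    rw [jacobiSym.eq_zero_iff_not_coprime.mpr hg] at hbJ
    norm_num at hbJ
  have hbM : Nat.Coprime b M := by
    have h4 : Nat.Coprime b 4 := Nat.Coprime.pow_right 2 hbodd.coprime_two_right
    have hna : Nat.Coprime b n.natAbs := by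
      have : Nat.gcd n.natAbs b = 1 := hgcd
      exact Nat.coprime_comm.mp this
    exact Nat.Coprime.mul_right h4 hna
  have hunit : IsUnit ((b : ZMod M)) := (ZMod.isUnit_iff_coprime b M).mpr hbM
  refine (Nat.infinite_setOfPred_prime_and_eq_mod hunit).mono ?_
  rintro p ⟨hp, hpb⟩
  haveI := Fact.mk hp
  have hmod : p ≡ b [MOD M] := (ZMod.natCast_eq_natCast_iff _ _ _).mp hpb
  have hpodd : Odd p := by
    have h2 : p % 2 = b % 2 := hmod.of_dvd (by omega : (2 : ℕ) ∣ M)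
    have := Nat.odd_iff.mp hbodd
    exact Nat.odd_iff.mpr (by omega)
  have hJ : jacobiSym n p = -1 := by
    rw [jacobiSym.mod_right n hpodd, show p % (4 * n.natAbs) = b % (4 * n.natAbs) from hmod,
      ← jacobiSym.mod_right n hbodd, hbJ]
  exact ⟨hp, ZMod.nonsquare_of_jacobiSym_eq_neg_one hJ⟩

/-- If `a y² - b x²` has a zero mod `l` with `x, y` coprime to `l` for all but
finitely many primes `l`, then `b / a` is the square of a rational number. -/
theorem stmt_11 (a b : ℤ) (ha : a ≠ 0) (hb : b ≠ 0)
    (h : {l : ℕ | l.Prime ∧ ¬ ∃ x y : ℤ, ¬ (l : ℤ) ∣ x ∧ ¬ (l : ℤ) ∣ y ∧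
        (l : ℤ) ∣ (a * y ^ 2 - b * x ^ 2)}.Finite) :
    ∃ r : ℚ, (b : ℚ) = (a : ℚ) * r ^ 2 := by
  have hab : (a * b : ℤ) ≠ 0 := mul_ne_zero ha hb
  have hsq : IsSquare (a * b : ℤ) := by
    by_contra hns
    obtain ⟨l, ⟨⟨hl, hlns⟩, hlnot⟩⟩ := ((aux_infinite_nonsquare_primes hab hns).diff h).nonempty
    simp only [Set.mem_setOf_eq, not_and, not_not] at hlnot
    obtain ⟨x, y, hx, hy, hdvd⟩ := hlnot hl
    haveI := Fact.mk hl
    have hx' : (x : ZMod l) ≠ 0 := by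
      rwa [Ne, ZMod.intCast_zmod_eq_zero_iff_dvd]
    have heq : (a : ZMod l) * (y : ZMod l) ^ 2 = (b : ZMod l) * (x : ZMod l) ^ 2 := by
      have h0 := (ZMod.intCast_zmod_eq_zero_iff_dvd _ l).mpr hdvd
      push_cast at h0
      linear_combination h0
    apply hlns
    refine ⟨(a : ZMod l) * (y : ZMod l) * ((x : ZMod l))⁻¹, ?_⟩
    have hinv : (x : ZMod l) * ((x : ZMod l))⁻¹ = 1 := mul_inv_cancel₀ hx'
    push_cast
    linear_combination (-(a : ZMod l) * ((x : ZMod l)⁻¹) ^ 2) * heq +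
      (-(a : ZMod l) * (b : ZMod l) * ((x : ZMod l) * ((x : ZMod l))⁻¹ + 1)) * hinv
  obtain ⟨c, hc⟩ := hsq
  refine ⟨(c : ℚ) / (a : ℚ), ?_⟩
  have ha' : (a : ℚ) ≠ 0 := Int.cast_ne_zero.mpr ha
  have hc' : (a : ℚ) * (b : ℚ) = (c : ℚ) * (c : ℚ) := by exact_mod_cast congrArg Int.cast hc
  field_simp
  linear_combination hc'
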